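/- arXiv:1401.5015 — 3 statements merged into one kernel-verified Lean document; each statement's English description precedes it below -/
import Mathlib

section
/- If there exists a ∈ (0,1) such that the Metropolis-Hastings proposal density satisfies q(y|x) ≥ a·f(y) for all x, y, then the n-step density p^n satisfies |p^n(y)/f(y) − 1| ≤ (1−a)^n · ‖p^0/f − 1‖_∞ for all y. -/
open MeasureTheory Real Filter Set

/-- Holden's geometric bound for the Metropolis-Hastings chain: if the transition
density `k` (built from the proposal `q`) satisfies the minorization
`k x y ≥ a * f y` with `a ∈ (0,1)`, where `f` is the stationary (target) density,
then the `n`-step density ratio contracts geometrically: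
`|p^n(y)/f(y) - 1| ≤ (1-a)^n * r`, with `r = ‖p^0/f - 1‖_∞`. -/
theorem mh_geometric_ratio {X : Type*} [MeasurableSpace X] (lam : Measure X)
    (f : X → ℝ) (k : X → X → ℝ) (p : ℕ → X → ℝ) (a r : ℝ)
    (ha : a ∈ Set.Ioo (0 : ℝ) 1)
    (hfpos : ∀ y, 0 < f y)
    (hfint : ∫ x, f x ∂lam = 1)
    (hppos : ∀ n x, 0 ≤ p n x)
    (hpint : ∀ n, ∫ x, p n x ∂lam = 1)
    (hkpos : ∀ x y, 0 ≤ k x y)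
    (hknorm : ∀ x, ∫ y, k x y ∂lam = 1)
    (hmin : ∀ x y, a * f y ≤ k x y)
    (hstat : ∀ y, ∫ x, f x * k x y ∂lam = f y)
    (hrec : ∀ n y, p (n + 1) y = ∫ x, p n x * k x y ∂lam)
    (h0 : ∀ y, |p 0 y / f y - 1| ≤ r) :
    ∀ n y, |p n y / f y - 1| ≤ (1 - a) ^ n * r := by
  obtain ⟨ha0, ha1⟩ := ha
  have hf_int : Integrable f lam := by
    by_contra h
    rw [integral_undef h] at hfint; norm_num at hfint
  have hp_int : ∀ n, Integrable (p n) lam := by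
    intro n
    by_contra h
    have := hpint n
    rw [integral_undef h] at this; norm_num at this
  have hk_int : ∀ y, Integrable (fun x => f x * k x y) lam := by
    intro y
    by_contra h
    have := hstat y
    rw [integral_undef h] at this
    exact (hfpos y).ne' this.symm
  have hkm : ∀ y, AEStronglyMeasurable (fun x => k x y) lam := by
    intro y
    have hfm : AEStronglyMeasurable (fun x => (f x)⁻¹) lam :=
      hf_int.aestronglyMeasurable.aemeasurable.inv.aestronglyMeasurable
    have h1 : AEStronglyMeasurable (fun x => (f x * k x y) * (f x)⁻¹) lam :=
      (hk_int y).aestronglyMeasurable.mul hfm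
    refine h1.congr ?_
    filter_upwards with x
    rw [mul_comm (f x), mul_assoc, mul_inv_cancel₀ (hfpos x).ne', mul_one]
  have hr : 0 ≤ r := by
    have hX : Nonempty X := by
      by_contra hX
      rw [not_nonempty_iff] at hX
      rw [integral_of_isEmpty] at hfint
      norm_num at hfint
    obtain ⟨y0⟩ := hX
    exact le_trans (abs_nonneg _) (h0 y0)
  intro n
  induction n with
  | zero => simpa using h0
  | succ n ih =>
    intro y
    set c := (1 - a) ^ n * r with hc
    have hc0 : 0 ≤ c := mul_nonneg (pow_nonneg (by linarith) n) hr
    have hbd : ∀ x, |p n x - f x| ≤ c * f x := by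
      intro x
      have h1 := ih x
      have hfx := hfpos x
      have heq : p n x - f x = (p n x / f x - 1) * f x := by field_simp
      rw [heq, abs_mul, abs_of_pos hfx]
      exact mul_le_mul_of_nonneg_right h1 hfx.le
    have hg_int : Integrable (fun x => p n x - f x) lam := (hp_int n).sub hf_int
    have hg0 : ∫ x, (p n x - f x) ∂lam = 0 := by
      rw [integral_sub (hp_int n) hf_int, hpint n, hfint]; ring
    have hgk_int : Integrable (fun x => (p n x - f x) * k x y) lam := by
      refine Integrable.mono ((hk_int y).const_mul c)
        (hg_int.aestronglyMeasurable.mul (hkm y)) ?_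
      filter_upwards with x
      have h1 : ‖(p n x - f x) * k x y‖ = |p n x - f x| * k x y := by
        rw [norm_mul, Real.norm_eq_abs, Real.norm_eq_abs, abs_of_nonneg (hkpos x y)]
      have h2 : ‖c * (f x * k x y)‖ = c * (f x * k x y) := by
        rw [Real.norm_eq_abs, abs_of_nonneg]
        exact mul_nonneg hc0 (mul_nonneg (hfpos x).le (hkpos x y))
      rw [h1, h2, ← mul_assoc]
      exact mul_le_mul_of_nonneg_right (hbd x) (hkpos x y)
    have hpk_int : Integrable (fun x => p n x * k x y) lam := by
      have heq : (fun x => p n x * k x y)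
          = fun x => (p n x - f x) * k x y + f x * k x y := by
        funext x; ring
      rw [heq]
      exact hgk_int.add (hk_int y)
    have hgk2 : Integrable (fun x => (p n x - f x) * (k x y - a * f y)) lam := by
      have heq : (fun x => (p n x - f x) * (k x y - a * f y))
          = fun x => (p n x - f x) * k x y - (a * f y) * (p n x - f x) := by
        funext x; ring
      rw [heq]
      exact hgk_int.sub (hg_int.const_mul _)
    have hdiff : p (n + 1) y - f y
        = ∫ x, (p n x - f x) * (k x y - a * f y) ∂lam := by
      have heq : (fun x => (p n x - f x) * (k x y - a * f y))
          = fun x => (p n x * k x y - f x * k x y) - (a * f y) * (p n x - f x) := by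
        funext x; ring
      have h3 : Integrable (fun x => p n x * k x y - f x * k x y) lam :=
        hpk_int.sub (hk_int y)
      rw [heq, integral_sub h3 (hg_int.const_mul _),
        integral_const_mul, hg0, integral_sub hpk_int (hk_int y), hstat y,
        hrec n y]
      ring
    have hub : Integrable (fun x => c * f x * (k x y - a * f y)) lam := by
      have heq : (fun x => c * f x * (k x y - a * f y))
          = fun x => c * (f x * k x y) - (c * (a * f y)) * f x := by
        funext x; ring
      rw [heq]
      exact ((hk_int y).const_mul c).sub (hf_int.const_mul _)
    have habs : |p (n + 1) y - f y| ≤ ∫ x, c * f x * (k x y - a * f y) ∂lam := by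
      rw [hdiff]
      calc |∫ x, (p n x - f x) * (k x y - a * f y) ∂lam|
          ≤ ∫ x, |(p n x - f x) * (k x y - a * f y)| ∂lam := by
            simpa only [Real.norm_eq_abs] using
              norm_integral_le_integral_norm (fun x => (p n x - f x) * (k x y - a * f y)) (μ := lam)
        _ ≤ ∫ x, c * f x * (k x y - a * f y) ∂lam := by
            refine integral_mono hgk2.abs hub ?_
            intro x
            dsimp only
            have hk0 : 0 ≤ k x y - a * f y := by linarith [hmin x y]
            rw [abs_mul, abs_of_nonneg hk0]
            exact mul_le_mul_of_nonneg_right (hbd x) hk0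
    have hval : ∫ x, c * f x * (k x y - a * f y) ∂lam = c * (1 - a) * f y := by
      have heq : (fun x => c * f x * (k x y - a * f y))
          = fun x => c * (f x * k x y) - (c * (a * f y)) * f x := by
        funext x; ring
      have h3 : Integrable (fun x => c * (f x * k x y)) lam := (hk_int y).const_mul c
      rw [heq, integral_sub h3 (hf_int.const_mul _),
        integral_const_mul, integral_const_mul, hstat y, hfint]
      ring
    have hfy := hfpos y
    have heq2 : |p (n + 1) y / f y - 1| = |p (n + 1) y - f y| / f y := by
      have h1 : p (n + 1) y / f y - 1 = (p (n + 1) y - f y) / f y := by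
        field_simp
      rw [h1, abs_div, abs_of_pos hfy]
    rw [heq2, div_le_iff₀ hfy]
    calc |p (n + 1) y - f y| ≤ c * (1 - a) * f y := hval ▸ habs
      _ = (1 - a) ^ (n + 1) * r * f y := by rw [hc, pow_succ]; ring
end

section
/- Under the uniform minorization q(y|x) ≥ δ·f(y) with δ ∈ (0,1), for α > 1 the Rényi divergence satisfies R_α(p^n, f) ≤ (α/(α−1))·r·ν^n, where r = ‖p^0/f − 1‖_∞ and ν = 1−δ. -/
open MeasureTheory Real Filter Set

/-- Under the uniform minorization `q(y|x) ≥ δ f(y)` with `δ ∈ (0,1)` (which yields the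
pointwise geometric bound `|pⁿ(y)/f(y) - 1| ≤ r νⁿ` with `ν = 1 - δ`), for `α > 1`
the Rényi divergence satisfies `R_α(pⁿ, f) ≤ (α/(α-1)) r νⁿ`. -/
theorem renyi_geometric_bound {X : Type*} [MeasurableSpace X] (lam : Measure X)
    (f : X → ℝ) (q : X → X → ℝ) (p : ℕ → X → ℝ) (δ r α : ℝ) (n : ℕ)
    (hδ : δ ∈ Set.Ioo (0 : ℝ) 1)
    (hα : 1 < α)
    (hr : 0 ≤ r)
    (hfpos : ∀ y, 0 < f y)
    (hfint : ∫ x, f x ∂lam = 1)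
    (hppos : ∀ m y, 0 ≤ p m y)
    (hpint : ∀ m, ∫ y, p m y ∂lam = 1)
    (hmin : ∀ x y, δ * f y ≤ q x y)
    (hbound : ∀ m y, |p m y / f y - 1| ≤ r * (1 - δ) ^ m) :
    (α - 1)⁻¹ * Real.log (∫ y, p n y ^ α * f y ^ (1 - α) ∂lam)
      ≤ (α / (α - 1)) * (r * (1 - δ) ^ n) := by
  set c : ℝ := r * (1 - δ) ^ n with hc
  have hν : (0:ℝ) ≤ 1 - δ := by linarith [hδ.2]
  have hc0 : 0 ≤ c := mul_nonneg hr (pow_nonneg hν n)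
  have h1c : (1:ℝ) ≤ 1 + c := by linarith
  have h1cpos : (0:ℝ) < 1 + c := by linarith
  have hαpos : (0:ℝ) < α - 1 := by linarith
  have hα0 : (0:ℝ) < α := by linarith
  -- f is integrable
  have hfI : Integrable f lam := by
    by_contra h
    rw [integral_undef h] at hfint
    norm_num at hfint
  -- pointwise bound on the integrand
  have hpt : ∀ y, p n y ^ α * f y ^ (1 - α) ≤ (1 + c) ^ α * f y := by
    intro y
    have hfy := hfpos y
    have hp : p n y ≤ (1 + c) * f y := by
      have := (abs_le.mp (hbound n y)).2
      have h2 : p n y / f y ≤ 1 + c := by linarith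
      calc p n y = (p n y / f y) * f y := by field_simp
        _ ≤ (1 + c) * f y := mul_le_mul_of_nonneg_right h2 hfy.le
    have hpow : p n y ^ α ≤ ((1 + c) * f y) ^ α :=
      Real.rpow_le_rpow (hppos n y) hp hα0.le
    have hmul : ((1 + c) * f y) ^ α = (1 + c) ^ α * f y ^ α :=
      Real.mul_rpow h1cpos.le hfy.le
    have step : p n y ^ α * f y ^ (1 - α) ≤ (1 + c) ^ α * f y ^ α * f y ^ (1 - α) := by
      have hf1α : (0:ℝ) ≤ f y ^ (1 - α) := Real.rpow_nonneg hfy.le _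
      calc p n y ^ α * f y ^ (1 - α) ≤ ((1 + c) * f y) ^ α * f y ^ (1 - α) :=
            mul_le_mul_of_nonneg_right hpow hf1α
        _ = (1 + c) ^ α * f y ^ α * f y ^ (1 - α) := by rw [hmul]
    calc p n y ^ α * f y ^ (1 - α) ≤ (1 + c) ^ α * f y ^ α * f y ^ (1 - α) := step
      _ = (1 + c) ^ α * (f y ^ α * f y ^ (1 - α)) := by ring
      _ = (1 + c) ^ α * f y := by
          rw [← Real.rpow_add hfy]
          norm_num
  -- bound the integral
  set I : ℝ := ∫ y, p n y ^ α * f y ^ (1 - α) ∂lam with hI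
  have hInn : 0 ≤ I := by
    apply integral_nonneg
    intro y
    exact mul_nonneg (Real.rpow_nonneg (hppos n y) _) (Real.rpow_nonneg (hfpos y).le _)
  have hIle : I ≤ (1 + c) ^ α := by
    have : I ≤ ∫ y, (1 + c) ^ α * f y ∂lam := by
      apply integral_mono_of_nonneg
      · exact ae_of_all _ fun y =>
          mul_nonneg (Real.rpow_nonneg (hppos n y) _) (Real.rpow_nonneg (hfpos y).le _)
      · exact hfI.const_mul _
      · exact ae_of_all _ hpt
    rwa [integral_const_mul, hfint, mul_one] at this
  have hlogC : Real.log ((1 + c) ^ α) = α * Real.log (1 + c) := Real.log_rpow h1cpos α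
  have hlog1c : Real.log (1 + c) ≤ c := by
    have := Real.log_le_sub_one_of_pos h1cpos
    linarith
  have hlogI : Real.log I ≤ α * c := by
    have hlog2 : Real.log I ≤ Real.log ((1 + c) ^ α) := by
      rcases eq_or_lt_of_le hInn with h | h
      · rw [← h, Real.log_zero, hlogC]
        exact mul_nonneg hα0.le (Real.log_nonneg h1c)
      · exact Real.log_le_log h hIle
    calc Real.log I ≤ α * Real.log (1 + c) := by rw [← hlogC]; exact hlog2
      _ ≤ α * c := mul_le_mul_of_nonneg_left hlog1c hα0.le
  calc (α - 1)⁻¹ * Real.log I ≤ (α - 1)⁻¹ * (α * c) :=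
        mul_le_mul_of_nonneg_left hlogI (inv_nonneg.mpr hαpos.le)
    _ = (α / (α - 1)) * c := by field_simp
end

section
/- Under the minorization bound |p^n/f − 1| ≤ r·ν^n with ν ∈ (0,1), for α > 1 the α-divergence satisfies |D_α(p^n, f)| ≤ (1/(α(α−1)))·((r·ν^n + 1)^α − 1), hence D_α(p^n, f) → 0 as n → ∞. -/
open MeasureTheory Real Filter Set Topology

/-- Under the minorization bound `|pⁿ/f - 1| ≤ r νⁿ` with `ν ∈ (0,1)`, for `α > 1` the
α-divergence satisfies `|D_α(pⁿ, f)| ≤ (α(α-1))⁻¹ ((r νⁿ + 1)^α - 1)`, hence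
`D_α(pⁿ, f) → 0` as `n → ∞`. -/
theorem alpha_divergence_geometric {X : Type*} [MeasurableSpace X] (lam : Measure X)
    (f : X → ℝ) (p : ℕ → X → ℝ) (r ν α : ℝ)
    (hν : ν ∈ Set.Ioo (0 : ℝ) 1)
    (hα : 1 < α)
    (hr : 0 ≤ r)
    (hfpos : ∀ y, 0 < f y)
    (hfint : ∫ x, f x ∂lam = 1)
    (hppos : ∀ n y, 0 ≤ p n y)
    (hpint : ∀ n, ∫ y, p n y ∂lam = 1)
    (hbound : ∀ n y, |p n y / f y - 1| ≤ r * ν ^ n) :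
    (∀ n : ℕ,
      |(α * (1 - α))⁻¹ * (1 - ∫ y, p n y ^ α * f y ^ (1 - α) ∂lam)|
        ≤ (α * (α - 1))⁻¹ * ((r * ν ^ n + 1) ^ α - 1)) ∧
    Filter.Tendsto
      (fun n : ℕ => (α * (1 - α))⁻¹ * (1 - ∫ y, p n y ^ α * f y ^ (1 - α) ∂lam))
      Filter.atTop (𝓝 0) := by
  have hα0 : (0 : ℝ) < α := lt_trans one_pos hα
  -- f is integrable
  have hfI : Integrable f lam := by
    by_contra h
    rw [integral_undef h] at hfint
    norm_num at hfint
  have hpI : ∀ n, Integrable (p n) lam := by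
    intro n
    by_contra h
    have h2 := hpint n
    rw [integral_undef h] at h2
    norm_num at h2
  -- main bound
  have key : ∀ n : ℕ,
      |(α * (1 - α))⁻¹ * (1 - ∫ y, p n y ^ α * f y ^ (1 - α) ∂lam)|
        ≤ (α * (α - 1))⁻¹ * ((r * ν ^ n + 1) ^ α - 1) := by
    intro n
    set s : ℝ := r * ν ^ n with hs
    have hs0 : 0 ≤ s := mul_nonneg hr (pow_nonneg hν.1.le n)
    set g : X → ℝ := fun y => p n y ^ α * f y ^ (1 - α) with hg
    -- rewrite g using quotient
    have hgq : ∀ y, g y = (p n y / f y) ^ α * f y := by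
      intro y
      have hf := hfpos y
      show p n y ^ α * f y ^ (1 - α) = _
      rw [Real.div_rpow (hppos n y) hf.le, Real.rpow_sub hf, Real.rpow_one]
      field_simp
    -- bounds on quotient
    have hql : ∀ y, 1 - s ≤ p n y / f y := fun y => by
      have := (abs_le.mp (hbound n y)).1; linarith
    have hqu : ∀ y, p n y / f y ≤ 1 + s := fun y => by
      have := (abs_le.mp (hbound n y)).2; linarith
    -- upper bound on g
    have hgu : ∀ y, g y ≤ (1 + s) ^ α * f y := by
      intro y
      rw [hgq y]
      have h1 : (p n y / f y) ^ α ≤ (1 + s) ^ α :=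
        Real.rpow_le_rpow (div_nonneg (hppos n y) (hfpos y).le) (hqu y) hα0.le
      exact mul_le_mul_of_nonneg_right h1 (hfpos y).le
    -- lower bound on g (Bernoulli)
    have hgl : ∀ y, f y + α * (p n y - f y) ≤ g y := by
      intro y
      rw [hgq y]
      set t : ℝ := p n y / f y with ht
      have ht0 : 0 ≤ t := div_nonneg (hppos n y) (hfpos y).le
      have hb : 1 + α * (t - 1) ≤ (1 + (t - 1)) ^ α :=
        one_add_mul_self_le_rpow_one_add (by linarith) hα.le
      have hb' : 1 + α * (t - 1) ≤ t ^ α := by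
        convert hb using 2; ring
      have hfe : (1 + α * (t - 1)) * f y ≤ t ^ α * f y :=
        mul_le_mul_of_nonneg_right hb' (hfpos y).le
      have heq : (1 + α * (t - 1)) * f y = f y + α * (p n y - f y) := by
        have hfne := (hfpos y).ne'
        have htf : t * f y = p n y := by rw [ht]; exact div_mul_cancel₀ _ hfne
        linear_combination α * htf
      linarith [hfe, heq.ge]
    have hg0 : ∀ y, 0 ≤ g y := fun y =>
      mul_nonneg (Real.rpow_nonneg (hppos n y) _) (Real.rpow_nonneg (hfpos y).le _)
    -- measurability
    have hgm : AEStronglyMeasurable g lam := by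
      have h1 : AEMeasurable (p n) lam := (hpI n).aemeasurable
      have h2 : AEMeasurable f lam := hfI.aemeasurable
      have h3 : AEMeasurable (fun y => (p n y / f y) ^ α * f y) lam :=
        ((Real.continuous_rpow_const hα0.le).measurable.comp_aemeasurable (h1.div h2)).mul h2
      have h4 : g = fun y => (p n y / f y) ^ α * f y := funext hgq
      rw [h4]
      exact h3.aestronglyMeasurable
    -- integrability of g
    have hgI : Integrable g lam := by
      refine Integrable.mono' (hfI.const_mul ((1 + s) ^ α)) hgm ?_
      filter_upwards with y
      rw [Real.norm_eq_abs, abs_of_nonneg (hg0 y)]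
      exact hgu y
    -- integral bounds
    have hIu : (∫ y, g y ∂lam) ≤ (1 + s) ^ α := by
      calc (∫ y, g y ∂lam) ≤ ∫ y, (1 + s) ^ α * f y ∂lam :=
            integral_mono hgI (hfI.const_mul _) hgu
        _ = (1 + s) ^ α := by rw [integral_const_mul, hfint, mul_one]
    have hIl : (1 : ℝ) ≤ ∫ y, g y ∂lam := by
      have hsub : Integrable (fun y => p n y - f y) lam := by
        exact (hpI n).sub hfI
      have hcm : Integrable (fun y => α * (p n y - f y)) lam := by
        simpa using hsub.const_mul α
      have h1 : Integrable (fun y => f y + α * (p n y - f y)) lam := by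
        exact hfI.add hcm
      have h2 : (∫ y, (f y + α * (p n y - f y)) ∂lam) = 1 := by
        rw [integral_add hfI hcm, integral_const_mul, integral_sub (hpI n) hfI,
          hfint, hpint n]
        ring
      calc (1 : ℝ) = ∫ y, (f y + α * (p n y - f y)) ∂lam := h2.symm
        _ ≤ ∫ y, g y ∂lam := integral_mono h1 hgI hgl
    -- put together
    have habs : |α * (1 - α)| = α * (α - 1) := by
      rw [abs_of_neg (by nlinarith)]; ring
    rw [abs_mul, abs_inv, habs, abs_of_nonpos (by linarith [hIl])]
    have : -(1 - ∫ y, g y ∂lam) ≤ (r * ν ^ n + 1) ^ α - 1 := by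
      have : (1 + s) ^ α = (r * ν ^ n + 1) ^ α := by rw [hs, add_comm]
      linarith [hIu, this.ge]
    exact mul_le_mul_of_nonneg_left this
      (inv_nonneg.mpr (by nlinarith))
  refine ⟨key, ?_⟩
  -- convergence of the bound to 0
  have hb0 : Tendsto (fun n : ℕ => (α * (α - 1))⁻¹ * ((r * ν ^ n + 1) ^ α - 1))
      atTop (𝓝 0) := by
    have h1 : Tendsto (fun n : ℕ => r * ν ^ n) atTop (𝓝 0) := by
      have := (tendsto_pow_atTop_nhds_zero_of_lt_one hν.1.le hν.2).const_mul r
      simpa using this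
    have h2 : Tendsto (fun n : ℕ => r * ν ^ n + 1) atTop (𝓝 1) := by
      have := h1.add tendsto_const_nhds (b := (1 : ℝ))
      simpa using this
    have h3 : Tendsto (fun n : ℕ => (r * ν ^ n + 1) ^ α) atTop (𝓝 1) := by
      have hc : ContinuousAt (fun x : ℝ => x ^ α) 1 :=
        Real.continuousAt_rpow_const 1 α (Or.inl one_ne_zero)
      have := hc.tendsto.comp h2
      rwa [Real.one_rpow] at this
    have h4 := ((h3.sub tendsto_const_nhds (b := (1 : ℝ))).const_mul ((α * (α - 1))⁻¹))
    simpa using h4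
  refine squeeze_zero_norm (fun n => ?_) hb0
  simpa only [Real.norm_eq_abs] using key n
end
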